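/- Let A ∈ ℂ^{m×p} (m ≥ p) be full rank with polar factor U = P(A), and let Ũ ∈ ℂ^{m×p} have orthonormal columns. Then ‖skew(Ũ*A)‖_F ≤ ‖U − Ũ‖_F · σ₁(A), where skew(B) = (B − B*)/2 and σ₁ is the largest singular value. -/

import Mathlib

open Matrix
open scoped ComplexOrder

/-- Frobenius norm of a complex matrix. -/
noncomputable def frob {m p : ℕ} (A : Matrix (Fin m) (Fin p) ℂ) : ℝ :=
  Real.sqrt (∑ i, ∑ j, ‖A i j‖ ^ 2)

/-- Euclidean norm of a complex vector. -/
noncomputable def vnorm {p : ℕ} (x : Fin p → ℂ) : ℝ :=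
  Real.sqrt (∑ i, ‖x i‖ ^ 2)

/-- The largest singular value of a matrix, characterized as the supremum of `‖A x‖`
over unit vectors `x`. -/
noncomputable def sigmaMax {m p : ℕ} (A : Matrix (Fin m) (Fin p) ℂ) : ℝ :=
  sSup {r : ℝ | ∃ x : Fin p → ℂ, vnorm x = 1 ∧ r = vnorm (A.mulVec x)}

lemma vnorm_eq {p : ℕ} (x : EuclideanSpace ℂ (Fin p)) : vnorm x = ‖x‖ := by
  rw [EuclideanSpace.norm_eq]; rfl

noncomputable def emb {m p : ℕ} (A : Matrix (Fin m) (Fin p) ℂ) :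
    EuclideanSpace ℂ (Fin m × Fin p) := WithLp.toLp 2 (fun k : Fin m × Fin p => A k.1 k.2)

lemma frob_eq {m p : ℕ} (A : Matrix (Fin m) (Fin p) ℂ) : frob A = ‖emb A‖ := by
  rw [EuclideanSpace.norm_eq, Fintype.sum_prod_type]; rfl

lemma frob_nonneg {m p : ℕ} (A : Matrix (Fin m) (Fin p) ℂ) : 0 ≤ frob A :=
  Real.sqrt_nonneg _

lemma emb_sub {m p : ℕ} (X Y : Matrix (Fin m) (Fin p) ℂ) : emb (X - Y) = emb X - emb Y := rfl

lemma emb_smul {m p : ℕ} (c : ℂ) (X : Matrix (Fin m) (Fin p) ℂ) : emb (c • X) = c • emb X := rfl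

lemma frob_sub_le {m p : ℕ} (X Y : Matrix (Fin m) (Fin p) ℂ) :
    frob (X - Y) ≤ frob X + frob Y := by
  rw [frob_eq, frob_eq, frob_eq, emb_sub]; exact norm_sub_le _ _

lemma frob_smul {m p : ℕ} (c : ℂ) (X : Matrix (Fin m) (Fin p) ℂ) :
    frob (c • X) = ‖c‖ * frob X := by
  rw [frob_eq, frob_eq, emb_smul, norm_smul]

lemma frob_conjTranspose {m p : ℕ} (X : Matrix (Fin m) (Fin p) ℂ) : frob Xᴴ = frob X := by
  unfold frob
  rw [Finset.sum_comm]
  simp [conjTranspose_apply]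

lemma frob_neg {m p : ℕ} (X : Matrix (Fin m) (Fin p) ℂ) : frob (-X) = frob X := by
  unfold frob; simp


def ev {p : ℕ} (x : Fin p → ℂ) : EuclideanSpace ℂ (Fin p) := WithLp.toLp 2 x

lemma vnorm_eq' {p : ℕ} (x : Fin p → ℂ) : vnorm x = ‖ev x‖ := vnorm_eq (ev x)

lemma ev_smul {p : ℕ} (c : ℂ) (x : Fin p → ℂ) : ev (c • x) = c • ev x := rfl

lemma sigmaMax_nonneg {m p : ℕ} (A : Matrix (Fin m) (Fin p) ℂ) : 0 ≤ sigmaMax A := by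
  apply Real.sSup_nonneg
  rintro r ⟨x, -, rfl⟩
  exact Real.sqrt_nonneg _

lemma sigmaMax_bddAbove {m p : ℕ} (A : Matrix (Fin m) (Fin p) ℂ) :
    BddAbove {r : ℝ | ∃ x : Fin p → ℂ, vnorm x = 1 ∧ r = vnorm (A.mulVec x)} := by
  set f : EuclideanSpace ℂ (Fin p) →L[ℂ] EuclideanSpace ℂ (Fin m) :=
    LinearMap.toContinuousLinearMap (Matrix.toEuclideanLin A)
  refine ⟨‖f‖, ?_⟩
  rintro r ⟨x, hx, rfl⟩
  have h1 : vnorm (A.mulVec x) = ‖f (ev x)‖ := vnorm_eq' (A.mulVec x)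
  rw [vnorm_eq'] at hx
  calc vnorm (A.mulVec x) = ‖f (ev x)‖ := h1
    _ ≤ ‖f‖ * ‖ev x‖ := f.le_opNorm _
    _ = ‖f‖ := by rw [hx, mul_one]

lemma mulVec_le {m p : ℕ} (A : Matrix (Fin m) (Fin p) ℂ) (x : Fin p → ℂ) :
    vnorm (A.mulVec x) ≤ sigmaMax A * vnorm x := by
  rcases eq_or_ne (vnorm x) 0 with hx | hx
  · have hx0 : x = 0 := by
      have := vnorm_eq' x
      rw [hx] at this
      have h0 : ev x = 0 := norm_eq_zero.mp this.symm
      exact congrArg (fun y : EuclideanSpace ℂ (Fin p) => (y : Fin p → ℂ)) h0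
    subst hx0
    rw [hx]
    simp [Matrix.mulVec_zero, vnorm]
  · have hpos : 0 < vnorm x := lt_of_le_of_ne (Real.sqrt_nonneg _) (Ne.symm hx)
    set c : ℝ := vnorm x with hc
    have hunit : vnorm ((c⁻¹ : ℂ) • x) = 1 := by
      rw [vnorm_eq', ev_smul, norm_smul]
      rw [← vnorm_eq']
      simp only [norm_inv, Complex.norm_real, Real.norm_eq_abs]
      rw [abs_of_pos hpos, inv_mul_cancel₀ hx]
    have hmem : vnorm (A.mulVec ((c⁻¹ : ℂ) • x)) ∈
        {r : ℝ | ∃ y : Fin p → ℂ, vnorm y = 1 ∧ r = vnorm (A.mulVec y)} :=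
      ⟨(c⁻¹ : ℂ) • x, hunit, rfl⟩
    have hle := le_csSup (sigmaMax_bddAbove A) hmem
    have hsc : vnorm (A.mulVec ((c⁻¹ : ℂ) • x)) = c⁻¹ * vnorm (A.mulVec x) := by
      rw [Matrix.mulVec_smul, vnorm_eq', ev_smul, norm_smul, ← vnorm_eq']
      simp only [norm_inv, Complex.norm_real, Real.norm_eq_abs]
      rw [abs_of_pos hpos]
    rw [hsc] at hle
    have h2 := mul_le_mul_of_nonneg_right hle (le_of_lt hpos)
    rw [inv_mul_eq_div, div_mul_cancel₀ _ hx] at h2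
    exact h2

lemma conjTranspose_mulVec_le {m p : ℕ} (A : Matrix (Fin m) (Fin p) ℂ) (y : Fin m → ℂ) :
    vnorm (Aᴴ.mulVec y) ≤ sigmaMax A * vnorm y := by
  set z : Fin p → ℂ := Aᴴ.mulVec y with hz
  rcases eq_or_ne (vnorm z) 0 with h0 | h0
  · rw [h0]
    exact mul_nonneg (sigmaMax_nonneg A) (Real.sqrt_nonneg _)
  · have hzpos : 0 < vnorm z := lt_of_le_of_ne (Real.sqrt_nonneg _) (Ne.symm h0)
    have hadj : Matrix.toEuclideanLin Aᴴ = LinearMap.adjoint (Matrix.toEuclideanLin A) :=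
      Matrix.toEuclideanLin_conjTranspose_eq_adjoint A
    have hev : ev z = Matrix.toEuclideanLin Aᴴ (ev y) := rfl
    have hinner : (inner ℂ (ev z) (ev z) : ℂ) = inner ℂ (ev y) (Matrix.toEuclideanLin A (ev z)) := by
      rw [hev, hadj, LinearMap.adjoint_inner_left]
    have hsq : (vnorm z) ^ 2 = ‖(inner ℂ (ev z) (ev z) : ℂ)‖ := by
      rw [vnorm_eq', inner_self_eq_norm_sq_to_K]
      simp [norm_pow]
    have hcs : ‖(inner ℂ (ev y) (Matrix.toEuclideanLin A (ev z)) : ℂ)‖ ≤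
        ‖ev y‖ * ‖Matrix.toEuclideanLin A (ev z)‖ := norm_inner_le_norm _ _
    have hAz : ‖Matrix.toEuclideanLin A (ev z)‖ = vnorm (A.mulVec z) := (vnorm_eq' _).symm
    have hbound : (vnorm z) ^ 2 ≤ vnorm y * (sigmaMax A * vnorm z) := by
      rw [hsq, hinner]
      refine le_trans hcs ?_
      rw [hAz, ← vnorm_eq' y]
      exact mul_le_mul_of_nonneg_left (mulVec_le A z) (Real.sqrt_nonneg _)
    have : vnorm z * vnorm z ≤ (sigmaMax A * vnorm y) * vnorm z := by
      calc vnorm z * vnorm z = (vnorm z) ^ 2 := (sq (vnorm z)).symm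
        _ ≤ vnorm y * (sigmaMax A * vnorm z) := hbound
        _ = (sigmaMax A * vnorm y) * vnorm z := by ring
    exact le_of_mul_le_mul_right this hzpos

lemma frob_conjTranspose_mul_le {m p : ℕ} (A : Matrix (Fin m) (Fin p) ℂ)
    (M : Matrix (Fin m) (Fin p) ℂ) :
    frob (Aᴴ * M) ≤ sigmaMax A * frob M := by
  have hσ := sigmaMax_nonneg A
  unfold frob
  rw [Finset.sum_comm]
  have hcol : ∀ j, ∑ i, ‖(Aᴴ * M) i j‖ ^ 2 ≤
      (sigmaMax A) ^ 2 * ∑ i, ‖M i j‖ ^ 2 := by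
    intro j
    have h1 : ∑ i, ‖(Aᴴ * M) i j‖ ^ 2 = (vnorm (Aᴴ.mulVec (fun k => M k j))) ^ 2 := by
      simp only [vnorm]
      rw [Real.sq_sqrt (Finset.sum_nonneg fun _ _ => sq_nonneg _)]
      refine Finset.sum_congr rfl fun i _ => ?_
      simp [Matrix.mulVec, dotProduct, Matrix.mul_apply]
    have h2 := conjTranspose_mulVec_le A (fun k => M k j)
    have h3 : (vnorm (Aᴴ.mulVec (fun k => M k j))) ^ 2 ≤
        (sigmaMax A * vnorm (fun k => M k j)) ^ 2 := by
      apply pow_le_pow_left₀ (Real.sqrt_nonneg _) h2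
    rw [h1]
    refine le_trans h3 ?_
    have h4 : (vnorm fun k => M k j) ^ 2 = ∑ i, ‖M i j‖ ^ 2 := by
      simp only [vnorm]
      exact Real.sq_sqrt (Finset.sum_nonneg fun _ _ => sq_nonneg _)
    rw [mul_pow, h4]
  calc Real.sqrt (∑ j, ∑ i, ‖(Aᴴ * M) i j‖ ^ 2)
      ≤ Real.sqrt (∑ j, (sigmaMax A) ^ 2 * ∑ i, ‖M i j‖ ^ 2) := by
        apply Real.sqrt_le_sqrt
        exact Finset.sum_le_sum fun j _ => hcol j
    _ = sigmaMax A * Real.sqrt (∑ i, ∑ j, ‖M i j‖ ^ 2) := by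
        rw [← Finset.mul_sum, Real.sqrt_mul (sq_nonneg _), Real.sqrt_sq hσ,
          Finset.sum_comm]

theorem skew_part_bound {m p : ℕ} (hmp : p ≤ m)
    (A U U' : Matrix (Fin m) (Fin p) ℂ) (H : Matrix (Fin p) (Fin p) ℂ)
    (hA : A.rank = p)
    (hAUH : A = U * H) (hU : Uᴴ * U = 1) (hH : H.PosDef)
    (hU' : U'ᴴ * U' = 1) :
    frob ((1 / 2 : ℂ) • (U'ᴴ * A - (U'ᴴ * A)ᴴ)) ≤ frob (U - U') * sigmaMax A := by
  set M : Matrix (Fin m) (Fin p) ℂ := U' - U with hM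
  have h1 : Uᴴ * A = H := by
    rw [hAUH, ← Matrix.mul_assoc, hU, Matrix.one_mul]
  have h2 : Aᴴ * U = H := by
    have : Aᴴ * U = Hᴴ := by
      rw [hAUH, Matrix.conjTranspose_mul, Matrix.mul_assoc, hU, Matrix.mul_one]
    rw [this, hH.isHermitian]
  have key : U'ᴴ * A - (U'ᴴ * A)ᴴ = Mᴴ * A - (Mᴴ * A)ᴴ := by
    simp only [hM, Matrix.conjTranspose_sub, Matrix.sub_mul, Matrix.conjTranspose_mul,
      Matrix.conjTranspose_conjTranspose]
    rw [h1, h2]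
    abel
  rw [key]
  have hfs : frob ((Mᴴ * A)ᴴ) = frob (Mᴴ * A) := frob_conjTranspose _
  have hMA : frob (Mᴴ * A) = frob (Aᴴ * M) := by
    rw [← frob_conjTranspose (Aᴴ * M), Matrix.conjTranspose_mul,
      Matrix.conjTranspose_conjTranspose]
  calc frob ((1 / 2 : ℂ) • (Mᴴ * A - (Mᴴ * A)ᴴ))
      = (1 / 2) * frob (Mᴴ * A - (Mᴴ * A)ᴴ) := by
        rw [frob_smul]; norm_num
    _ ≤ (1 / 2) * (frob (Mᴴ * A) + frob ((Mᴴ * A)ᴴ)) := by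
        have := frob_sub_le (Mᴴ * A) ((Mᴴ * A)ᴴ)
        linarith
    _ = frob (Aᴴ * M) := by rw [hfs, hMA]; ring
    _ ≤ sigmaMax A * frob M := frob_conjTranspose_mul_le A M
    _ = frob (U - U') * sigmaMax A := by
        rw [hM]
        have : frob (U' - U) = frob (U - U') := by rw [← frob_neg (U' - U), neg_sub]
        rw [this, mul_comm]
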